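/- Let (H, ρ) be a Gessel pair. The primes of the free monoid H₋ of minus-paths are exactly those elements σ ∈ H such that ρ(σ) < 0 and every H-head of σ other than σ itself has nonnegative ρ-value. -/

import Mathlib

def rhoVal {α : Type*} (ρ : α → ℤ) (l : List α) : ℤ := (l.map ρ).sum

def IsMinusPath {α : Type*} (ρ : α → ℤ) (l : List α) : Prop :=
  l = [] ∨ (rhoVal ρ l < 0 ∧ ∀ i < l.length, rhoVal ρ l < rhoVal ρ (l.take i))

/-- `p` is a prime of the submonoid `M` of the free monoid on `α`. -/
def IsPrimeIn {α : Type*} (M : Set (List α)) (p : List α) : Prop :=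
  p ∈ M ∧ p ≠ [] ∧ ∀ a b : List α, a ∈ M → b ∈ M → a ++ b = p → a = [] ∨ b = []

lemma rhoVal_append {α : Type*} (ρ : α → ℤ) (a b : List α) :
    rhoVal ρ (a ++ b) = rhoVal ρ a + rhoVal ρ b := by
  simp [rhoVal]

/-- **Primes of the monoid of minus-paths.**
For a Gessel pair `(H, ρ)` (with `H` the free monoid on the set `α` of its
primes), the primes of the free monoid `H₋` of minus-paths are exactly the
elements `σ` with `ρ(σ) < 0` all of whose `H`-heads other than `σ` itself
(i.e. all proper prefixes) have nonnegative `ρ`-value. -/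
theorem primes_of_minus_paths {α : Type*} (ρ : α → ℤ) (σ : List α) :
    IsPrimeIn {l : List α | IsMinusPath ρ l} σ ↔
      (rhoVal ρ σ < 0 ∧ ∀ i < σ.length, 0 ≤ rhoVal ρ (σ.take i)) := by
  classical
  constructor
  · rintro ⟨hM, hne, hprime⟩
    rcases hM with h | ⟨hneg, hpref⟩
    · exact absurd h hne
    refine ⟨hneg, ?_⟩
    intro i hi
    by_contra hcon
    push_neg at hcon
    -- there is a proper prefix with negative value; find the least minimizing index
    set f : ℕ → ℤ := fun j => rhoVal ρ (σ.take j) with hf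
    have hnonempty : (Finset.range σ.length).Nonempty :=
      ⟨i, Finset.mem_range.mpr hi⟩
    obtain ⟨j₀, hj₀mem, hj₀min⟩ := Finset.exists_min_image (Finset.range σ.length) f hnonempty
    have hP : ∃ j, j < σ.length ∧ ∀ k < σ.length, f j ≤ f k :=
      ⟨j₀, Finset.mem_range.mp hj₀mem, fun k hk => hj₀min k (Finset.mem_range.mpr hk)⟩
    set i₀ := Nat.find hP with hi₀
    obtain ⟨hi₀lt, hi₀min⟩ := Nat.find_spec hP
    have hfi₀neg : f i₀ < 0 := lt_of_le_of_lt (hi₀min i hi) hcon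
    have hi₀pos : 0 < i₀ := by
      rcases Nat.eq_zero_or_pos i₀ with h | h
      · exfalso
        have : f 0 = 0 := by simp [hf, rhoVal]
        rw [h, this] at hfi₀neg; exact absurd hfi₀neg (by norm_num)
      · exact h
    have hstrict : ∀ j < i₀, f i₀ < f j := by
      intro j hj
      have hjlt : j < σ.length := lt_trans hj hi₀lt
      have := Nat.find_min hP hj
      push_neg at this
      obtain ⟨k, hk, hfk⟩ := this hjlt
      exact lt_of_le_of_lt (hi₀min k hk) hfk
    set a := σ.take i₀ with ha
    set b := σ.drop i₀ with hb
    have hab : a ++ b = σ := List.take_append_drop i₀ σ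
    have hla : a.length = i₀ := by
      simp [ha, List.length_take, Nat.min_eq_left (le_of_lt hi₀lt)]
      exact le_of_lt hi₀lt
    have hlb : b.length = σ.length - i₀ := by simp [hb]
    have haM : IsMinusPath ρ a := by
      right
      refine ⟨hfi₀neg, ?_⟩
      intro j hj
      rw [hla] at hj
      have : a.take j = σ.take j := by
        simp [ha, List.take_take, Nat.min_eq_left (le_of_lt hj)]
      rw [this]
      exact hstrict j hj
    have hrb : rhoVal ρ b = rhoVal ρ σ - f i₀ := by
      have := rhoVal_append ρ a b
      rw [hab] at this
      have hfa : rhoVal ρ a = f i₀ := rfl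
      omega
    have hbM : IsMinusPath ρ b := by
      right
      constructor
      · rw [hrb]
        have := hpref i₀ hi₀lt
        exact sub_neg.mpr this
      · intro j hj
        rw [hlb] at hj
        have htake : σ.take (i₀ + j) = a ++ b.take j := by
          rw [ha, hb, List.take_add]
        have hval : rhoVal ρ (b.take j) = f (i₀ + j) - f i₀ := by
          have := rhoVal_append ρ a (b.take j)
          rw [← htake] at this
          have hfa : rhoVal ρ a = f i₀ := rfl
          have : f (i₀ + j) = f i₀ + rhoVal ρ (b.take j) := this
          omega
        rw [hrb, hval]
        have : rhoVal ρ σ < f (i₀ + j) := hpref (i₀ + j) (by omega)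
        omega
    rcases hprime a b haM hbM hab with h | h
    · have : a.length = 0 := by rw [h]; rfl
      omega
    · have : b.length = 0 := by rw [h]; rfl
      have hσpos : 0 < σ.length := lt_of_le_of_lt (Nat.zero_le _) hi₀lt
      omega
  · rintro ⟨hneg, hpref⟩
    have hne : σ ≠ [] := by
      intro h
      rw [h] at hneg
      simp [rhoVal] at hneg
    refine ⟨?_, hne, ?_⟩
    · right
      exact ⟨hneg, fun i hi => lt_of_lt_of_le hneg (hpref i hi)⟩
    · intro a b ha hb hab
      by_contra hcon
      push_neg at hcon
      obtain ⟨hane, hbne⟩ := hcon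
      have haneg : rhoVal ρ a < 0 := by
        rcases ha with h | ⟨h, _⟩
        · exact absurd h hane
        · exact h
      have halt : a.length < σ.length := by
        have : σ.length = a.length + b.length := by rw [← hab]; simp
        have : b.length ≠ 0 := fun h => hbne (List.length_eq_zero_iff.mp h)
        omega
      have : σ.take a.length = a := by
        rw [← hab, List.take_left]
      have := hpref a.length halt
      rw [‹σ.take a.length = a›] at this
      omega
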